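/- For every q ≥ 1 and every n, there exists a set of n points in the plane in general position together with a (2q+1)-coloring such that every monochromatic triangle contains at least q points of the set in its interior. -/

import Mathlib

open scoped Classical
open Finset

set_option maxHeartbeats 1600000

noncomputable section

namespace HortonProof

/-- orientation determinant of three planar points -/
def sig (a b c : ℝ × ℝ) : ℝ :=
  (b.1 - a.1) * (c.2 - a.2) - (c.1 - a.1) * (b.2 - a.2)

lemma sig_cyc (a b c : ℝ × ℝ) : sig a b c = sig b c a := by
  simp only [sig]; ring

lemma not_collinear_of_sig (a b c : ℝ × ℝ) (h : sig a b c ≠ 0) :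
    ¬ Collinear ℝ ({a, b, c} : Set (ℝ × ℝ)) := by
  intro hc
  rw [collinear_iff_exists_forall_eq_smul_vadd] at hc
  obtain ⟨p₀, v, hv⟩ := hc
  obtain ⟨ra, ha⟩ := hv a (by simp)
  obtain ⟨rb, hb⟩ := hv b (by simp)
  obtain ⟨rc, hcc⟩ := hv c (by simp)
  apply h
  subst ha hb hcc
  simp only [sig, Prod.fst_add, Prod.snd_add, Prod.smul_fst, Prod.smul_snd, vadd_eq_add,
    smul_eq_mul]
  ring

/-- Barycentric-coordinate criterion for interior membership in a triangle. -/
lemma mem_interior_tri {a b c p : ℝ × ℝ}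
    (h1 : 0 < sig a b p * sig a b c)
    (h2 : 0 < sig b c p * sig b c a)
    (h3 : 0 < sig c a p * sig c a b) :
    p ∈ interior (convexHull ℝ ({a, b, c} : Set (ℝ × ℝ))) := by
  set D : ℝ := sig a b c with hD
  have hbca : sig b c a = D := by rw [hD]; simp only [sig]; ring
  have hcab : sig c a b = D := by rw [hD]; simp only [sig]; ring
  have hDne : D ≠ 0 := by
    intro h0
    rw [h0, mul_zero] at h1
    exact lt_irrefl 0 h1
  -- the open set
  set U : Set (ℝ × ℝ) := {z | 0 < sig a b z * D ∧ 0 < sig b c z * D ∧ 0 < sig c a z * D} with hU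
  have hopen : IsOpen U := by
    have c1 : Continuous fun z : ℝ × ℝ => sig a b z * D := by
      simp only [sig]; fun_prop
    have c2 : Continuous fun z : ℝ × ℝ => sig b c z * D := by
      simp only [sig]; fun_prop
    have c3 : Continuous fun z : ℝ × ℝ => sig c a z * D := by
      simp only [sig]; fun_prop
    have : U = ((fun z : ℝ × ℝ => sig a b z * D) ⁻¹' Set.Ioi 0) ∩
        (((fun z : ℝ × ℝ => sig b c z * D) ⁻¹' Set.Ioi 0) ∩
         ((fun z : ℝ × ℝ => sig c a z * D) ⁻¹' Set.Ioi 0)) := by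
      ext z; simp [hU, Set.mem_setOf_eq, and_assoc]
    rw [this]
    exact ((isOpen_Ioi.preimage c1).inter ((isOpen_Ioi.preimage c2).inter
      (isOpen_Ioi.preimage c3)))
  have hsub : U ⊆ convexHull ℝ ({a, b, c} : Set (ℝ × ℝ)) := by
    intro z hz
    obtain ⟨hz1, hz2, hz3⟩ := hz
    -- barycentric coordinates
    set α : ℝ := sig b c z / D
    set β : ℝ := sig c a z / D
    set γ : ℝ := sig a b z / D
    have hα : 0 < α := by
      rcases lt_or_gt_of_ne hDne with hneg | hpos
      · have : sig b c z < 0 := by nlinarith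
        exact div_pos_of_neg_of_neg this hneg
      · have : 0 < sig b c z := by nlinarith
        exact div_pos this hpos
    have hβ : 0 < β := by
      rcases lt_or_gt_of_ne hDne with hneg | hpos
      · have : sig c a z < 0 := by nlinarith
        exact div_pos_of_neg_of_neg this hneg
      · have : 0 < sig c a z := by nlinarith
        exact div_pos this hpos
    have hγ : 0 < γ := by
      rcases lt_or_gt_of_ne hDne with hneg | hpos
      · have : sig a b z < 0 := by nlinarith
        exact div_pos_of_neg_of_neg this hneg
      · have : 0 < sig a b z := by nlinarith
        exact div_pos this hpos
    have hsum : α + β + γ = 1 := by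
      simp only [α, β, γ]; field_simp
      simp only [sig, hD]; ring
    have hcombo : α • a + β • b + γ • c = z := by
      have h1' : α * a.1 + β * b.1 + γ * c.1 = z.1 := by
        simp only [α, β, γ]; field_simp
        simp only [sig, hD]; ring
      have h2' : α * a.2 + β * b.2 + γ * c.2 = z.2 := by
        simp only [α, β, γ]; field_simp
        simp only [sig, hD]; ring
      ext <;> simpa [Prod.fst_add, Prod.snd_add]
    -- membership in convex hull
    have hmem := Finset.centerMass_mem_convexHull (t := (Finset.univ : Finset (Fin 3)))
      (w := ![α, β, γ]) (z := ![a, b, c]) (s := ({a, b, c} : Set (ℝ × ℝ)))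
      (by intro i _; fin_cases i <;> simp [le_of_lt hα, le_of_lt hβ, le_of_lt hγ])
      (by simp [Fin.sum_univ_three, hsum])
      (by intro i _; fin_cases i <;> simp)
    have hcm : (Finset.univ : Finset (Fin 3)).centerMass ![α, β, γ] ![a, b, c] = z := by
      rw [Finset.centerMass]
      simp only [Fin.sum_univ_three, Matrix.cons_val_zero, Matrix.cons_val_one, Matrix.head_cons,
        Matrix.cons_val_two, Matrix.tail_cons]
      rw [hsum, inv_one, one_smul]
      exact hcombo
    rwa [hcm] at hmem
  refine mem_interior.mpr ⟨U, hsub, hopen, ⟨h1, ?_, ?_⟩⟩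
  · rw [hbca] at h2; exact h2
  · rw [hcab] at h3; exact h3


end HortonProof

namespace HortonProof

/-- the big base -/
def W (n : ℕ) : ℤ := 2 * (n + 1) ^ 2 + 2

lemma W_ge_two (n : ℕ) : 2 ≤ W n := by unfold W; nlinarith [sq_nonneg ((n : ℤ) + 1)]

lemma W_pos (n : ℕ) : 0 < W n := lt_of_lt_of_le (by norm_num) (W_ge_two n)

def bitZ (X b : ℕ) : ℤ := if X.testBit b then 1 else 0

def yZ (n X : ℕ) : ℤ := ∑ b ∈ range n, bitZ X b * (W n) ^ (n - b)

def P (n : ℕ) (i : ℕ) : ℝ × ℝ := ((i : ℝ), ((yZ n i : ℤ) : ℝ))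

def sigZ (n A B C : ℕ) : ℤ :=
  ((B : ℤ) - A) * (yZ n C - yZ n A) - ((C : ℤ) - A) * (yZ n B - yZ n A)

def cf (n A B C b : ℕ) : ℤ :=
  ((B : ℤ) - A) * (bitZ C b - bitZ A b) - ((C : ℤ) - A) * (bitZ B b - bitZ A b)

lemma sig_eq_sigZ (n A B C : ℕ) : sig (P n A) (P n B) (P n C) = ((sigZ n A B C : ℤ) : ℝ) := by
  simp only [sig, P, sigZ]
  push_cast
  ring

lemma sigZ_eq_sum (n A B C : ℕ) : sigZ n A B C = ∑ b ∈ range n, cf n A B C b * (W n) ^ (n - b) := by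
  simp only [sigZ, yZ, cf]
  rw [← Finset.sum_sub_distrib, ← Finset.sum_sub_distrib, Finset.mul_sum, Finset.mul_sum,
    ← Finset.sum_sub_distrib]
  apply Finset.sum_congr rfl
  intro b _
  ring

lemma cf_abs_le (n A B C b : ℕ) (hA : A < n) (hB : B < n) (hC : C < n) :
    |cf n A B C b| ≤ 2 * n := by
  have h1 : |(B : ℤ) - A| ≤ n := by
    rw [abs_le]; constructor <;> [skip; skip] <;> push_cast <;> omega
  have h2 : |(C : ℤ) - A| ≤ n := by
    rw [abs_le]; constructor <;> [skip; skip] <;> push_cast <;> omega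
  have h3 : |bitZ C b - bitZ A b| ≤ 1 := by
    unfold bitZ; split_ifs <;> norm_num
  have h4 : |bitZ B b - bitZ A b| ≤ 1 := by
    unfold bitZ; split_ifs <;> norm_num
  calc |cf n A B C b| ≤ |((B : ℤ) - A) * (bitZ C b - bitZ A b)| +
        |((C : ℤ) - A) * (bitZ B b - bitZ A b)| := abs_sub _ _
    _ ≤ (n : ℤ) * 1 + (n : ℤ) * 1 := by
        rw [abs_mul, abs_mul]
        exact add_le_add (mul_le_mul h1 h3 (abs_nonneg _) (by positivity))
          (mul_le_mul h2 h4 (abs_nonneg _) (by positivity))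
    _ = 2 * n := by push_cast; ring

end HortonProof

namespace HortonProof

lemma dom_pos (n A B C τ : ℕ) (hA : A < n) (hB : B < n) (hC : C < n) (hτ : τ < n)
    (h0 : ∀ b < τ, cf n A B C b = 0) (h1 : 1 ≤ cf n A B C τ) :
    0 < sigZ n A B C := by
  have hW2 := W_ge_two n
  have hWpos := W_pos n
  rw [sigZ_eq_sum]
  have hsplit : ∑ b ∈ range n, cf n A B C b * (W n) ^ (n - b) =
      (∑ b ∈ range τ, cf n A B C b * (W n) ^ (n - b)) + cf n A B C τ * (W n) ^ (n - τ) +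
      ∑ b ∈ Ico (τ + 1) n, cf n A B C b * (W n) ^ (n - b) := by
    rw [← Finset.sum_range_succ]
    exact (Finset.sum_range_add_sum_Ico _ (by omega)).symm
  rw [hsplit]
  have hz : ∑ b ∈ range τ, cf n A B C b * (W n) ^ (n - b) = 0 :=
    Finset.sum_eq_zero fun b hb => by
      rw [h0 b (Finset.mem_range.mp hb), zero_mul]
  rw [hz, zero_add]
  -- bound the tail
  have htail : |∑ b ∈ Ico (τ + 1) n, cf n A B C b * (W n) ^ (n - b)| ≤
      (n : ℤ) * (2 * n * (W n) ^ (n - τ - 1)) := by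
    calc |∑ b ∈ Ico (τ + 1) n, cf n A B C b * (W n) ^ (n - b)|
        ≤ ∑ b ∈ Ico (τ + 1) n, |cf n A B C b * (W n) ^ (n - b)| :=
          Finset.abs_sum_le_sum_abs _ _
      _ ≤ ∑ _b ∈ Ico (τ + 1) n, 2 * (n : ℤ) * (W n) ^ (n - τ - 1) := by
          apply Finset.sum_le_sum
          intro b hb
          obtain ⟨hb1, hb2⟩ := Finset.mem_Ico.mp hb
          rw [abs_mul, abs_pow, abs_of_pos hWpos]
          have e1 : |cf n A B C b| ≤ 2 * n := cf_abs_le n A B C b hA hB hC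
          have e2 : (W n) ^ (n - b) ≤ (W n) ^ (n - τ - 1) :=
            pow_le_pow_right₀ (by omega) (by omega)
          exact mul_le_mul e1 e2 (by positivity) (by positivity)
      _ ≤ (n : ℤ) * (2 * n * (W n) ^ (n - τ - 1)) := by
          rw [Finset.sum_const, Nat.card_Ico, nsmul_eq_mul]
          have : ((n - (τ + 1) : ℕ) : ℤ) ≤ (n : ℤ) := by push_cast; omega
          have hnn : (0:ℤ) ≤ 2 * (n : ℤ) * (W n) ^ (n - τ - 1) := by positivity
          calc ((n - (τ + 1) : ℕ) : ℤ) * (2 * (n : ℤ) * (W n) ^ (n - τ - 1))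
              ≤ (n : ℤ) * (2 * (n : ℤ) * (W n) ^ (n - τ - 1)) := by
                apply mul_le_mul_of_nonneg_right this hnn
            _ = (n : ℤ) * (2 * n * (W n) ^ (n - τ - 1)) := by ring
  have hmain : (W n) ^ (n - τ) ≤ cf n A B C τ * (W n) ^ (n - τ) := by
    have : (0:ℤ) < (W n) ^ (n - τ) := by positivity
    nlinarith
  have hWgt : 2 * (n : ℤ) * n < W n := by unfold W; nlinarith [sq_nonneg (n:ℤ)]
  have hpow : (W n) ^ (n - τ) = W n * (W n) ^ (n - τ - 1) := by
    rw [← pow_succ']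
    congr 1
    omega
  have habs := (abs_le.mp htail).1
  have : (n : ℤ) * (2 * n * (W n) ^ (n - τ - 1)) < (W n) ^ (n - τ) := by
    rw [hpow]
    have h0' : (0:ℤ) < (W n) ^ (n - τ - 1) := by positivity
    nlinarith
  nlinarith

lemma dom_neg (n A B C τ : ℕ) (hA : A < n) (hB : B < n) (hC : C < n) (hτ : τ < n)
    (h0 : ∀ b < τ, cf n A B C b = 0) (h1 : cf n A B C τ ≤ -1) :
    sigZ n A B C < 0 := by
  have key : 0 < sigZ n A C B := by
    apply dom_pos n A C B τ hA hC hB hτ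
    · intro b hb
      have := h0 b hb
      unfold cf at this ⊢
      linarith [this]
    · unfold cf at h1 ⊢
      linarith [h1]
  have : sigZ n A B C = - sigZ n A C B := by unfold sigZ; ring
  rw [this]
  omega

end HortonProof

namespace HortonProof

lemma testBit_eq_below (u c τ : ℕ) (b : ℕ) (hb : b < τ) :
    (u + 2 ^ τ * c).testBit b = u.testBit b := by
  have h1 : (u + 2 ^ τ * c) % 2 ^ τ = u % 2 ^ τ := by
    simp [Nat.add_mul_mod_self_left]
  have e1 : (u + 2 ^ τ * c).testBit b = ((u + 2 ^ τ * c) % 2 ^ τ).testBit b := by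
    rw [Nat.testBit_mod_two_pow]
    simp [hb]
  have e2 : u.testBit b = (u % 2 ^ τ).testBit b := by
    rw [Nat.testBit_mod_two_pow]
    simp [hb]
  rw [e1, e2, h1]

lemma testBit_div (u τ : ℕ) : u.testBit τ = decide (u / 2 ^ τ % 2 = 1) :=
  Nat.testBit_eq_decide_div_mod_eq

lemma div_add_pow_mul (u τ s : ℕ) : (u + 2 ^ τ * s) / 2 ^ τ = u / 2 ^ τ + s := by
  rw [Nat.add_mul_div_left _ _ (Nat.two_pow_pos τ)]

lemma testBit_at (u τ s : ℕ) :
    (u + 2 ^ τ * s).testBit τ = decide ((u / 2 ^ τ + s) % 2 = 1) := by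
  rw [testBit_div, div_add_pow_mul]

end HortonProof

namespace HortonProof

lemma core (n u v w t t' m s : ℕ)
    (hvn : v < n) (hwn : w < n)
    (hveq : v = u + 2 ^ t' * m)
    (hs1 : 1 ≤ s) (hsm : s < m)
    (htt' : t < t')
    (hw_below : ∀ b, b < t → w.testBit b = u.testBit b)
    (hw_t : w.testBit t = !u.testBit t)
    (hv_t' : v.testBit t' ≠ u.testBit t')
    (hl_t' : (u + 2 ^ t' * s).testBit t' = !u.testBit t) :
    P n (u + 2 ^ t' * s) ∈ interior (convexHull ℝ ({P n u, P n v, P n w} : Set (ℝ × ℝ))) := by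
  set l : ℕ := u + 2 ^ t' * s with hldef
  have hpow_pos : 0 < 2 ^ t' := Nat.two_pow_pos t'
  have huv : u < v := by
    rw [hveq]
    have : 1 ≤ m := le_trans hs1 (le_of_lt hsm)
    nlinarith
  have hul : u < l := by
    rw [hldef]; nlinarith
  have hlv : l < v := by
    rw [hldef, hveq]
    have : 2 ^ t' * s < 2 ^ t' * m := by
      exact Nat.mul_lt_mul_of_pos_left hsm hpow_pos
    omega
  have hln : l < n := lt_trans hlv hvn
  have hun : u < n := lt_trans huv hvn
  have ht'n : t' < n := by
    have h1 : 2 ^ t' ≤ v := by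
      calc 2 ^ t' ≤ 2 ^ t' * m := Nat.le_mul_of_pos_right _ (by omega)
        _ ≤ v := by omega
    have h2 : (2:ℕ) ^ t' < 2 ^ n := lt_of_le_of_lt h1 (lt_of_lt_of_le hvn (le_of_lt (Nat.lt_two_pow_self)))
    exact (Nat.pow_lt_pow_iff_right (by norm_num)).mp h2
  have htn : t < n := lt_trans htt' ht'n
  -- bit agreements
  have hv_below : ∀ b, b < t' → v.testBit b = u.testBit b := by
    intro b hb; rw [hveq]; exact testBit_eq_below u m t' b hb
  have hl_below : ∀ b, b < t' → l.testBit b = u.testBit b := by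
    intro b hb; rw [hldef]; exact testBit_eq_below u s t' b hb
  have hv_t : v.testBit t = u.testBit t := hv_below t htt'
  have hl_t : l.testBit t = u.testBit t := hl_below t htt'
  -- zero coefficients
  have hz_uvw : ∀ b, b < t → cf n u v w b = 0 := by
    intro b hb
    have h1 : v.testBit b = u.testBit b := hv_below b (lt_trans hb htt')
    have h2 : w.testBit b = u.testBit b := hw_below b hb
    simp only [cf, bitZ, h1, h2]; ring
  have hz_vwl : ∀ b, b < t → cf n v w l b = 0 := by
    intro b hb
    have h1 : v.testBit b = u.testBit b := hv_below b (lt_trans hb htt')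
    have h2 : w.testBit b = u.testBit b := hw_below b hb
    have h3 : l.testBit b = u.testBit b := hl_below b (lt_trans hb htt')
    simp only [cf, bitZ, h1, h2, h3]; ring
  have hz_vwu : ∀ b, b < t → cf n v w u b = 0 := by
    intro b hb
    have h1 : v.testBit b = u.testBit b := hv_below b (lt_trans hb htt')
    have h2 : w.testBit b = u.testBit b := hw_below b hb
    simp only [cf, bitZ, h1, h2]; ring
  have hz_wul : ∀ b, b < t → cf n w u l b = 0 := by
    intro b hb
    have h1 : w.testBit b = u.testBit b := hw_below b hb
    have h3 : l.testBit b = u.testBit b := hl_below b (lt_trans hb htt')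
    simp only [cf, bitZ, h1, h3]; ring
  have hz_wuv : ∀ b, b < t → cf n w u v b = 0 := by
    intro b hb
    have h1 : w.testBit b = u.testBit b := hw_below b hb
    have h2 : v.testBit b = u.testBit b := hv_below b (lt_trans hb htt')
    simp only [cf, bitZ, h1, h2]; ring
  have hz_uvl : ∀ b, b < t' → cf n u v l b = 0 := by
    intro b hb
    have h1 : v.testBit b = u.testBit b := hv_below b hb
    have h3 : l.testBit b = u.testBit b := hl_below b hb
    simp only [cf, bitZ, h1, h3]; ring
  have hcast : ((u:ℤ) < l) ∧ ((l:ℤ) < v) ∧ ((u:ℤ) < v) := by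
    refine ⟨?_, ?_, ?_⟩ <;> exact_mod_cast (by omega : _)
  obtain ⟨hul', hlv', huv'⟩ := hcast
  -- Product Z2 : 0 < sigZ v w l * sigZ v w u
  have Z2 : 0 < sigZ n v w l * sigZ n v w u := by
    cases ha : u.testBit t with
    | false =>
      have c1 : 1 ≤ cf n v w l t := by
        simp [cf, bitZ, hv_t, hw_t, hl_t, ha, Bool.not_false]
        omega
      have c2 : 1 ≤ cf n v w u t := by
        simp [cf, bitZ, hv_t, hw_t, ha, Bool.not_false]
        omega
      exact mul_pos (dom_pos n v w l t hvn hwn hln htn hz_vwl c1)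
        (dom_pos n v w u t hvn hwn hun htn hz_vwu c2)
    | true =>
      have c1 : cf n v w l t ≤ -1 := by
        simp [cf, bitZ, hv_t, hw_t, hl_t, ha, Bool.not_true]
        omega
      have c2 : cf n v w u t ≤ -1 := by
        simp [cf, bitZ, hv_t, hw_t, ha, Bool.not_true]
        omega
      exact mul_pos_of_neg_of_neg (dom_neg n v w l t hvn hwn hln htn hz_vwl c1)
        (dom_neg n v w u t hvn hwn hun htn hz_vwu c2)
  -- Product Z3 : 0 < sigZ w u l * sigZ w u v
  have Z3 : 0 < sigZ n w u l * sigZ n w u v := by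
    cases ha : u.testBit t with
    | false =>
      have c1 : 1 ≤ cf n w u l t := by
        simp [cf, bitZ, hw_t, hl_t, ha, Bool.not_false]
        omega
      have c2 : 1 ≤ cf n w u v t := by
        simp [cf, bitZ, hw_t, hv_t, ha, Bool.not_false]
        omega
      exact mul_pos (dom_pos n w u l t hwn hun hln htn hz_wul c1)
        (dom_pos n w u v t hwn hun hvn htn hz_wuv c2)
    | true =>
      have c1 : cf n w u l t ≤ -1 := by
        simp [cf, bitZ, hw_t, hl_t, ha, Bool.not_true]
        omega
      have c2 : cf n w u v t ≤ -1 := by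
        simp [cf, bitZ, hw_t, hv_t, ha, Bool.not_true]
        omega
      exact mul_pos_of_neg_of_neg (dom_neg n w u l t hwn hun hln htn hz_wul c1)
        (dom_neg n w u v t hwn hun hvn htn hz_wuv c2)
  -- Product Z1 : 0 < sigZ u v l * sigZ u v w
  have Z1 : 0 < sigZ n u v l * sigZ n u v w := by
    cases ha : u.testBit t with
    | false =>
      have hβ : l.testBit t' = true := by rw [hl_t', ha]; rfl
      have c2 : 1 ≤ cf n u v w t := by
        simp [cf, bitZ, hv_t, hw_t, ha, Bool.not_false]
        omega
      have c1 : 1 ≤ cf n u v l t' := by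
        cases hα : u.testBit t' with
        | false =>
          have hvb : v.testBit t' = true := by
            cases hvb : v.testBit t' with
            | false => exact absurd (hvb.trans hα.symm) hv_t'
            | true => rfl
          simp [cf, bitZ, hα, hβ, hvb]
          omega
        | true =>
          have hvb : v.testBit t' = false := by
            cases hvb : v.testBit t' with
            | true => exact absurd (hvb.trans hα.symm) hv_t'
            | false => rfl
          simp [cf, bitZ, hα, hβ, hvb]
          omega
      exact mul_pos (dom_pos n u v l t' hun hvn hln ht'n hz_uvl c1)
        (dom_pos n u v w t hun hvn hwn htn hz_uvw c2)
    | true =>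
      have hβ : l.testBit t' = false := by rw [hl_t', ha]; rfl
      have c2 : cf n u v w t ≤ -1 := by
        simp [cf, bitZ, hv_t, hw_t, ha, Bool.not_true]
        omega
      have c1 : cf n u v l t' ≤ -1 := by
        cases hα : u.testBit t' with
        | false =>
          have hvb : v.testBit t' = true := by
            cases hvb : v.testBit t' with
            | false => exact absurd (hvb.trans hα.symm) hv_t'
            | true => rfl
          simp [cf, bitZ, hα, hβ, hvb]
          omega
        | true =>
          have hvb : v.testBit t' = false := by
            cases hvb : v.testBit t' with
            | true => exact absurd (hvb.trans hα.symm) hv_t'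
            | false => rfl
          simp [cf, bitZ, hα, hβ, hvb]
          omega
      exact mul_pos_of_neg_of_neg (dom_neg n u v l t' hun hvn hln ht'n hz_uvl c1)
        (dom_neg n u v w t hun hvn hwn htn hz_uvw c2)
  -- conclude via the geometric bridge
  apply mem_interior_tri
  · rw [sig_eq_sigZ, sig_eq_sigZ, ← Int.cast_mul]
    exact_mod_cast Z1
  · rw [sig_eq_sigZ, sig_eq_sigZ, ← Int.cast_mul]
    exact_mod_cast Z2
  · rw [sig_eq_sigZ, sig_eq_sigZ, ← Int.cast_mul]
    exact_mod_cast Z3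

end HortonProof

namespace HortonProof

lemma testBit_add_odd (u t E : ℕ) (hE : E % 2 = 1) :
    (u + 2 ^ t * E).testBit t = !u.testBit t := by
  rw [testBit_at, testBit_div]
  rcases Nat.mod_two_eq_zero_or_one (u / 2 ^ t) with h | h
  · have h2 : (u / 2 ^ t + E) % 2 = 1 := by omega
    simp [h, h2]
  · have h2 : (u / 2 ^ t + E) % 2 = 0 := by omega
    simp [h, h2]

lemma testBit_add_even (u t E : ℕ) (hE : E % 2 = 0) :
    (u + 2 ^ t * E).testBit t = u.testBit t := by
  rw [testBit_at, testBit_div]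
  rcases Nat.mod_two_eq_zero_or_one (u / 2 ^ t) with h | h
  · have h2 : (u / 2 ^ t + E) % 2 = 0 := by omega
    simp [h, h2]
  · have h2 : (u / 2 ^ t + E) % 2 = 1 := by omega
    simp [h, h2]

lemma testBit_parity_eq (u t t' : ℕ) (h : u / 2 ^ t' % 2 = u / 2 ^ t % 2) :
    u.testBit t' = u.testBit t := by
  rw [testBit_div, testBit_div, h]

lemma testBit_parity_ne (u t t' : ℕ) (h : u / 2 ^ t' % 2 ≠ u / 2 ^ t % 2) :
    u.testBit t' = !u.testBit t := by
  rw [testBit_div, testBit_div]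
  rcases Nat.mod_two_eq_zero_or_one (u / 2 ^ t) with h1 | h1 <;>
    rcases Nat.mod_two_eq_zero_or_one (u / 2 ^ t') with h2 | h2 <;>
      simp [h1, h2] at h ⊢

end HortonProof

namespace HortonProof

lemma P_inj (n : ℕ) : Function.Injective (P n) := by
  intro a b h
  have : ((a : ℕ) : ℝ) = ((b : ℕ) : ℝ) := congrArg Prod.fst h
  exact_mod_cast this

lemma count_of_pair (q n u v w t t' m : ℕ) (i j k : ℕ)
    (hvn : v < n) (hwn : w < n)
    (hveq : v = u + 2 ^ t' * m) (hm2 : 2 * q + 1 ≤ m)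
    (htt' : t < t')
    (hw_below : ∀ b, b < t → w.testBit b = u.testBit b)
    (hw_t : w.testBit t = !u.testBit t)
    (hv_t' : v.testBit t' ≠ u.testBit t')
    (hset : ({P n u, P n v, P n w} : Set (ℝ × ℝ)) = {P n i, P n j, P n k}) :
    q ≤ (((Finset.range n).image (P n)).filter
      (fun p => p ∈ interior (convexHull ℝ ({P n i, P n j, P n k} : Set (ℝ × ℝ))))).card := by
  classical
  set c : ℕ := if u / 2 ^ t' % 2 = u / 2 ^ t % 2 then 1 else 2 with hc
  have hc1 : 1 ≤ c := by rw [hc]; split_ifs <;> norm_num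
  have hc2 : c ≤ 2 := by rw [hc]; split_ifs <;> norm_num
  have hl_t' : ∀ s : ℕ, s % 2 = c % 2 → (u + 2 ^ t' * s).testBit t' = !u.testBit t := by
    intro s hs
    rw [hc] at hs
    split_ifs at hs with hpar
    · rw [testBit_add_odd u t' s hs, testBit_parity_eq u t t' hpar]
    · rw [testBit_add_even u t' s (by omega), testBit_parity_ne u t t' hpar]
  set f : ℕ → ℝ × ℝ := fun x => P n (u + 2 ^ t' * (2 * x + c)) with hf
  have hcore : ∀ x, x < q → f x ∈ ((Finset.range n).image (P n)).filter
      (fun p => p ∈ interior (convexHull ℝ ({P n i, P n j, P n k} : Set (ℝ × ℝ)))) := by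
    intro x hx
    have hs1 : 1 ≤ 2 * x + c := by omega
    have hsm : 2 * x + c < m := by omega
    have hl_lt_v : u + 2 ^ t' * (2 * x + c) < v := by
      rw [hveq]
      have : 2 ^ t' * (2 * x + c) < 2 ^ t' * m :=
        Nat.mul_lt_mul_of_pos_left hsm (Nat.two_pow_pos t')
      omega
    have hln : u + 2 ^ t' * (2 * x + c) < n := lt_trans hl_lt_v hvn
    rw [Finset.mem_filter]
    constructor
    · exact Finset.mem_image.mpr ⟨_, Finset.mem_range.mpr hln, rfl⟩
    · rw [← hset]
      exact core n u v w t t' m (2 * x + c) hvn hwn hveq hs1 hsm htt' hw_below hw_t hv_t'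
        (hl_t' (2 * x + c) (by omega))
  have hinj : Set.InjOn f (Finset.range q) := by
    intro x hx y hy hxy
    have h0 := P_inj n hxy
    have h2 : 2 ^ t' * (2 * x + c) = 2 ^ t' * (2 * y + c) := by omega
    have h3 := Nat.eq_of_mul_eq_mul_left (Nat.two_pow_pos t') h2
    omega
  calc q = (Finset.range q).card := (Finset.card_range q).symm
    _ = ((Finset.range q).image f).card := (Finset.card_image_of_injOn hinj).symm
    _ ≤ _ := by
        apply Finset.card_le_card
        intro p hp
        obtain ⟨x, hx, rfl⟩ := Finset.mem_image.mp hp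
        exact hcore x (Finset.mem_range.mp hx)

end HortonProof

namespace HortonProof

lemma bool_ne_not (b : Bool) : (!b) ≠ b := by cases b <;> simp

lemma key (q n : ℕ) (i j k : ℕ)
    (hjn : j < n) (hkn : k < n) (hij : i < j) (hjk : j < k)
    (hd1 : (2 * q + 1) ∣ (j - i)) (hd2 : (2 * q + 1) ∣ (k - j)) :
    q ≤ (((Finset.range n).image (P n)).filter
      (fun p => p ∈ interior (convexHull ℝ ({P n i, P n j, P n k} : Set (ℝ × ℝ))))).card := by
  classical
  set r : ℕ := 2 * q + 1 with hr
  set d1 : ℕ := j - i with hd1def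
  set d2 : ℕ := k - j with hd2def
  have hd1pos : 0 < d1 := by omega
  have hd2pos : 0 < d2 := by omega
  have hd1ne : d1 ≠ 0 := by omega
  have hd2ne : d2 ≠ 0 := by omega
  set t1 : ℕ := d1.factorization 2 with ht1
  set t2 : ℕ := d2.factorization 2 with ht2
  set t : ℕ := min t1 t2 with ht
  have f1 : 2 ^ t1 ∣ d1 := Nat.ordProj_dvd d1 2
  have f2 : 2 ^ t2 ∣ d2 := Nat.ordProj_dvd d2 2
  have odd1 : ¬ 2 ∣ (d1 / 2 ^ t1) := Nat.not_dvd_ordCompl Nat.prime_two hd1ne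
  have odd2 : ¬ 2 ∣ (d2 / 2 ^ t2) := Nat.not_dvd_ordCompl Nat.prime_two hd2ne
  have ht_d1 : 2 ^ t ∣ d1 := dvd_trans (pow_dvd_pow 2 (min_le_left t1 t2)) f1
  have ht_d2 : 2 ^ t ∣ d2 := dvd_trans (pow_dvd_pow 2 (min_le_right t1 t2)) f2
  set e1 : ℕ := d1 / 2 ^ t with he1def
  set e2 : ℕ := d2 / 2 ^ t with he2def
  have he1 : 2 ^ t * e1 = d1 := Nat.mul_div_cancel' ht_d1
  have he2 : 2 ^ t * e2 = d2 := Nat.mul_div_cancel' ht_d2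
  have hrodd : Odd r := ⟨q, by omega⟩
  have hcop : ∀ s : ℕ, Nat.Coprime r (2 ^ s) :=
    fun s => Nat.Coprime.pow_right s (hrodd.coprime_two_right)
  have hnotboth : ¬ (e1 % 2 = 0 ∧ e2 % 2 = 0) := by
    rintro ⟨h1, h2⟩
    have g1 : 2 ^ (t + 1) ∣ d1 := by
      obtain ⟨c1, hc1⟩ : 2 ∣ e1 := by omega
      refine ⟨c1, ?_⟩
      rw [← he1, hc1, pow_succ]
      ring
    have g2 : 2 ^ (t + 1) ∣ d2 := by
      obtain ⟨c2, hc2⟩ : 2 ∣ e2 := by omega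
      refine ⟨c2, ?_⟩
      rw [← he2, hc2, pow_succ]
      ring
    have l1 : t + 1 ≤ t1 := by
      rw [ht1]
      exact (Nat.Prime.pow_dvd_iff_le_factorization Nat.prime_two hd1ne).mp g1
    have l2 : t + 1 ≤ t2 := by
      rw [ht2]
      exact (Nat.Prime.pow_dvd_iff_le_factorization Nat.prime_two hd2ne).mp g2
    omega
  have hkeq : k = i + 2 ^ t * (e1 + e2) := by
    have : 2 ^ t * (e1 + e2) = d1 + d2 := by rw [Nat.mul_add, he1, he2]
    omega
  have hjeq : j = i + 2 ^ t * e1 := by omega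
  -- helper to finish given a pair configuration
  rcases Nat.mod_two_eq_zero_or_one e1 with he1p | he1p
  · -- Case A : e1 even, e2 odd, pair (i,j), w = k
    have he2p : e2 % 2 = 1 := by
      rcases Nat.mod_two_eq_zero_or_one e2 with h | h
      · exact absurd ⟨he1p, h⟩ hnotboth
      · exact h
    set m : ℕ := d1 / 2 ^ t1 with hmdef
    have hveq : j = i + 2 ^ t1 * m := by
      have : 2 ^ t1 * m = d1 := Nat.mul_div_cancel' f1
      omega
    have hmodd : m % 2 = 1 := by
      have h := odd1
      rw [hmdef]
      omega
    have hrm : r ∣ m := by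
      have hrd : r ∣ d1 := hd1
      rw [← Nat.mul_div_cancel' f1] at hrd
      exact (Nat.Coprime.dvd_of_dvd_mul_left (hcop t1) hrd)
    have hm0 : m ≠ 0 := by
      intro h0
      rw [h0, Nat.mul_zero] at hveq
      omega
    have hm2 : 2 * q + 1 ≤ m := by have := Nat.le_of_dvd (Nat.pos_of_ne_zero hm0) hrm; omega
    have htt' : t < t1 := by
      have g1 : 2 ^ (t + 1) ∣ d1 := by
        obtain ⟨c1, hc1⟩ : 2 ∣ e1 := by omega
        refine ⟨c1, ?_⟩
        rw [← he1, hc1, pow_succ]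
        ring
      have l1 : t + 1 ≤ t1 := by
        rw [ht1]
        exact (Nat.Prime.pow_dvd_iff_le_factorization Nat.prime_two hd1ne).mp g1
      omega
    have hw_below : ∀ b, b < t → k.testBit b = i.testBit b := by
      intro b hb
      rw [hkeq]
      exact testBit_eq_below i (e1 + e2) t b hb
    have hw_t : k.testBit t = !i.testBit t := by
      rw [hkeq]
      exact testBit_add_odd i t (e1 + e2) (by omega)
    have hv_t' : j.testBit t1 ≠ i.testBit t1 := by
      rw [hveq, testBit_add_odd i t1 m hmodd]
      exact bool_ne_not _
    exact count_of_pair q n i j k t t1 m i j k hjn hkn hveq hm2 htt' hw_below hw_t hv_t' rfl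
  · rcases Nat.mod_two_eq_zero_or_one e2 with he2p | he2p
    · -- Case B : e2 even, e1 odd, pair (j,k), w = i
      set m : ℕ := d2 / 2 ^ t2 with hmdef
      have hveq : k = j + 2 ^ t2 * m := by
        have : 2 ^ t2 * m = d2 := Nat.mul_div_cancel' f2
        omega
      have hmodd : m % 2 = 1 := by
        have h := odd2
        rw [hmdef]
        omega
      have hrm : r ∣ m := by
        have hrd : r ∣ d2 := hd2
        rw [← Nat.mul_div_cancel' f2] at hrd
        exact (Nat.Coprime.dvd_of_dvd_mul_left (hcop t2) hrd)
      have hm0 : m ≠ 0 := by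
        intro h0
        rw [h0, Nat.mul_zero] at hveq
        omega
      have hm2 : 2 * q + 1 ≤ m := by have := Nat.le_of_dvd (Nat.pos_of_ne_zero hm0) hrm; omega
      have htt' : t < t2 := by
        have g2 : 2 ^ (t + 1) ∣ d2 := by
          obtain ⟨c2, hc2⟩ : 2 ∣ e2 := by omega
          refine ⟨c2, ?_⟩
          rw [← he2, hc2, pow_succ]
          ring
        have l2 : t + 1 ≤ t2 := by
          rw [ht2]
          exact (Nat.Prime.pow_dvd_iff_le_factorization Nat.prime_two hd2ne).mp g2
        omega
      have hw_below : ∀ b, b < t → i.testBit b = j.testBit b := by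
        intro b hb
        rw [hjeq]
        exact (testBit_eq_below i e1 t b hb).symm
      have hw_t : i.testBit t = !j.testBit t := by
        have : j.testBit t = !i.testBit t := by
          rw [hjeq]
          exact testBit_add_odd i t e1 he1p
        rw [this, Bool.not_not]
      have hv_t' : k.testBit t2 ≠ j.testBit t2 := by
        rw [hveq, testBit_add_odd j t2 m hmodd]
        exact bool_ne_not _
      have hset : ({P n j, P n k, P n i} : Set (ℝ × ℝ)) = {P n i, P n j, P n k} := by
        ext p
        simp only [Set.mem_insert_iff, Set.mem_singleton_iff]
        tauto
      exact count_of_pair q n j k i t t2 m i j k hkn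
        (lt_trans hij hjn) hveq hm2 htt' hw_below hw_t hv_t' hset
    · -- Case C : both odd, pair (i,k), w = j
      set D : ℕ := d1 + d2 with hDdef
      have hDne : D ≠ 0 := by omega
      set t' : ℕ := D.factorization 2 with ht'def
      have fD : 2 ^ t' ∣ D := Nat.ordProj_dvd D 2
      set m : ℕ := D / 2 ^ t' with hmdef
      have hveq : k = i + 2 ^ t' * m := by
        have : 2 ^ t' * m = D := Nat.mul_div_cancel' fD
        omega
      have hmodd : m % 2 = 1 := by
        have h := Nat.not_dvd_ordCompl Nat.prime_two hDne
        rw [hmdef, ht'def]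
        omega
      have hrm : r ∣ m := by
        have hrd : r ∣ D := dvd_add hd1 hd2
        rw [← Nat.mul_div_cancel' fD] at hrd
        exact (Nat.Coprime.dvd_of_dvd_mul_left (hcop t') hrd)
      have hm0 : m ≠ 0 := by
        intro h0
        rw [h0, Nat.mul_zero] at hveq
        omega
      have hm2 : 2 * q + 1 ≤ m := by have := Nat.le_of_dvd (Nat.pos_of_ne_zero hm0) hrm; omega
      have htt' : t < t' := by
        have gD : 2 ^ (t + 1) ∣ D := by
          obtain ⟨cD, hcD⟩ : 2 ∣ (e1 + e2) := by omega
          refine ⟨cD, ?_⟩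
          have hD' : D = 2 ^ t * (e1 + e2) := by
            rw [Nat.mul_add, he1, he2]
          rw [hD', hcD, pow_succ]
          ring
        have lD : t + 1 ≤ t' := by
          rw [ht'def]
          exact (Nat.Prime.pow_dvd_iff_le_factorization Nat.prime_two hDne).mp gD
        omega
      have hw_below : ∀ b, b < t → j.testBit b = i.testBit b := by
        intro b hb
        rw [hjeq]
        exact testBit_eq_below i e1 t b hb
      have hw_t : j.testBit t = !i.testBit t := by
        rw [hjeq]
        exact testBit_add_odd i t e1 he1p
      have hv_t' : k.testBit t' ≠ i.testBit t' := by
        rw [hveq, testBit_add_odd i t' m hmodd]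
        exact bool_ne_not _
      have hset : ({P n i, P n k, P n j} : Set (ℝ × ℝ)) = {P n i, P n j, P n k} := by
        ext p
        simp only [Set.mem_insert_iff, Set.mem_singleton_iff]
        tauto
      exact count_of_pair q n i k j t t' m i j k hkn hjn hveq hm2 htt' hw_below hw_t hv_t' hset

end HortonProof

namespace HortonProof

lemma dom_ne (n A B C τ : ℕ) (hA : A < n) (hB : B < n) (hC : C < n) (hτ : τ < n)
    (h0 : ∀ b < τ, cf n A B C b = 0) (hne : cf n A B C τ ≠ 0) :
    sigZ n A B C ≠ 0 := by
  rcases lt_or_gt_of_ne hne with h | h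
  · exact ne_of_lt (dom_neg n A B C τ hA hB hC hτ h0 (by omega))
  · exact ne_of_gt (dom_pos n A B C τ hA hB hC hτ h0 (by omega))

lemma sigZ_ne_zero (n A B C : ℕ) (hA : A < n) (hB : B < n) (hC : C < n)
    (hAB : A ≠ B) (hAC : A ≠ C) (hBC : B ≠ C) :
    sigZ n A B C ≠ 0 := by
  classical
  have hex : ∃ b, ¬(B.testBit b = A.testBit b ∧ C.testBit b = A.testBit b) := by
    by_contra hcon
    push_neg at hcon
    exact hAB (Nat.eq_of_testBit_eq fun i => (hcon i).1).symm
  set τ : ℕ := Nat.find hex with hτdef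
  have hspec := Nat.find_spec hex
  rw [← hτdef] at hspec
  have hbelow : ∀ b, b < τ → (B.testBit b = A.testBit b ∧ C.testBit b = A.testBit b) := by
    intro b hb
    have h2 := Nat.find_min hex hb
    rw [not_not] at h2
    exact h2
  have hτn : τ < n := by
    by_contra hge
    push_neg at hge
    apply hspec
    have hfalse : ∀ x : ℕ, x < n → x.testBit τ = false := by
      intro x hx
      apply Nat.testBit_lt_two_pow
      calc x < n := hx
        _ < 2 ^ n := Nat.lt_two_pow_self
        _ ≤ 2 ^ τ := Nat.pow_le_pow_right (by norm_num) hge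
    rw [hfalse A hA, hfalse B hB, hfalse C hC]
    exact ⟨rfl, rfl⟩
  have h0 : ∀ b, b < τ → cf n A B C b = 0 := by
    intro b hb
    obtain ⟨h1, h2⟩ := hbelow b hb
    simp only [cf, bitZ, h1, h2]
    ring
  have hABz : ((A : ℤ)) ≠ (B : ℤ) := by exact_mod_cast hAB
  have hACz : ((A : ℤ)) ≠ (C : ℤ) := by exact_mod_cast hAC
  have hBCz : ((B : ℤ)) ≠ (C : ℤ) := by exact_mod_cast hBC
  have hne : cf n A B C τ ≠ 0 := by
    cases hA' : A.testBit τ <;> cases hB' : B.testBit τ <;> cases hC' : C.testBit τ <;>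
      simp [cf, bitZ, hA', hB', hC'] <;>
      first
        | (exact hspec ⟨hB'.trans hA'.symm, hC'.trans hA'.symm⟩)
        | omega
  exact dom_ne n A B C τ hA hB hC hτn h0 hne

end HortonProof

namespace HortonProof

lemma mod_dvd_sub (r x y : ℕ) (hxy : x < y) (h : x % r = y % r) : r ∣ y - x :=
  (Nat.modEq_iff_dvd' (le_of_lt hxy)).mp h

lemma final_count (q n A B D : ℕ) (hA : A < n) (hB : B < n) (hD : D < n)
    (hAB : A ≠ B) (hAD : A ≠ D) (hBD : B ≠ D)
    (h1 : A % (2 * q + 1) = B % (2 * q + 1)) (h2 : B % (2 * q + 1) = D % (2 * q + 1)) :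
    q ≤ (((Finset.range n).image (P n)).filter
      (fun p => p ∈ interior (convexHull ℝ ({P n A, P n B, P n D} : Set (ℝ × ℝ))))).card := by
  classical
  have h3 : A % (2 * q + 1) = D % (2 * q + 1) := h1.trans h2
  have hsets : ∀ x y z : ℕ, ({P n x, P n y, P n z} : Set (ℝ × ℝ)) = {P n A, P n B, P n D} →
      q ≤ (((Finset.range n).image (P n)).filter
        (fun p => p ∈ interior (convexHull ℝ ({P n x, P n y, P n z} : Set (ℝ × ℝ))))).card →
      q ≤ (((Finset.range n).image (P n)).filter
        (fun p => p ∈ interior (convexHull ℝ ({P n A, P n B, P n D} : Set (ℝ × ℝ))))).card := by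
    intro x y z hxyz hcard
    rw [← hxyz]
    exact hcard
  rcases Nat.lt_trichotomy A B with hab | hab | hab
  · rcases Nat.lt_trichotomy B D with hbd | hbd | hbd
    · -- A < B < D
      exact hsets A B D rfl (key q n A B D hB hD hab hbd
        (mod_dvd_sub _ _ _ hab h1) (mod_dvd_sub _ _ _ hbd h2))
    · exact absurd hbd hBD
    · rcases Nat.lt_trichotomy A D with had | had | had
      · -- A < D < B
        refine hsets A D B ?_ (key q n A D B hD hB had hbd
          (mod_dvd_sub _ _ _ had h3) (mod_dvd_sub _ _ _ hbd h2.symm))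
        ext p
        simp only [Set.mem_insert_iff, Set.mem_singleton_iff]
        tauto
      · exact absurd had hAD
      · -- D < A < B
        refine hsets D A B ?_ (key q n D A B hA hB had hab
          (mod_dvd_sub _ _ _ had h3.symm) (mod_dvd_sub _ _ _ hab h1))
        ext p
        simp only [Set.mem_insert_iff, Set.mem_singleton_iff]
        tauto
  · exact absurd hab hAB
  · rcases Nat.lt_trichotomy A D with had | had | had
    · -- B < A < D
      refine hsets B A D ?_ (key q n B A D hA hD hab had
        (mod_dvd_sub _ _ _ hab h1.symm) (mod_dvd_sub _ _ _ had h3))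
      ext p
      simp only [Set.mem_insert_iff, Set.mem_singleton_iff]
      tauto
    · exact absurd had hAD
    · rcases Nat.lt_trichotomy B D with hbd | hbd | hbd
      · -- B < D < A
        refine hsets B D A ?_ (key q n B D A hD hA hbd had
          (mod_dvd_sub _ _ _ hbd h2) (mod_dvd_sub _ _ _ had h3.symm))
        ext p
        simp only [Set.mem_insert_iff, Set.mem_singleton_iff]
        tauto
      · exact absurd hbd hBD
      · -- D < B < A
        refine hsets D B A ?_ (key q n D B A hB hA hbd hab
          (mod_dvd_sub _ _ _ hbd h2.symm) (mod_dvd_sub _ _ _ hab h1.symm))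
        ext p
        simp only [Set.mem_insert_iff, Set.mem_singleton_iff]
        tauto

end HortonProof

/-- A planar point set is in general position if no three distinct points are collinear. -/
def GenPos (S : Set (ℝ × ℝ)) : Prop :=
  ∀ p ∈ S, ∀ q ∈ S, ∀ r ∈ S, p ≠ q → p ≠ r → q ≠ r →
    ¬ Collinear ℝ ({p, q, r} : Set (ℝ × ℝ))

/-- Number of points of `S` strictly inside the triangle `a b c`. -/
def triPts (S : Finset (ℝ × ℝ)) (a b c : ℝ × ℝ) : ℕ :=
  (S.filter (fun p => p ∈ interior (convexHull ℝ ({a, b, c} : Set (ℝ × ℝ))))).card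

/-- `S` (colored by `χ`) contains a monochromatic triangle with at most `s` interior points. -/
def MonoTriangle {c : ℕ} (S : Finset (ℝ × ℝ)) (χ : ℝ × ℝ → Fin c) (s : ℕ) : Prop :=
  ∃ a ∈ S, ∃ b ∈ S, ∃ d ∈ S, a ≠ b ∧ a ≠ d ∧ b ≠ d ∧
    χ a = χ b ∧ χ b = χ d ∧ triPts S a b d ≤ s

/-- For every `q ≥ 1` and every `n`, there is a `(2q+1)`-colored set of `n` points in
general position in which every monochromatic triangle has at least `q` interior points. -/
theorem horton_coloring_lower (q : ℕ) (hq : 1 ≤ q) (n : ℕ) :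
    ∃ S : Finset (ℝ × ℝ), S.card = n ∧ GenPos (S : Set (ℝ × ℝ)) ∧
      ∃ χ : ℝ × ℝ → Fin (2 * q + 1),
        ∀ a ∈ S, ∀ b ∈ S, ∀ d ∈ S, a ≠ b → a ≠ d → b ≠ d →
          χ a = χ b → χ b = χ d → q ≤ triPts S a b d := by
  classical
  refine ⟨(Finset.range n).image (HortonProof.P n), ?_, ?_, ?_⟩
  · rw [Finset.card_image_of_injective _ (HortonProof.P_inj n), Finset.card_range]
  · -- general position
    intro p hp p2 hp2 p3 hp3 h12 h13 h23
    obtain ⟨A, hA, rfl⟩ := Finset.mem_image.mp (Finset.mem_coe.mp hp)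
    obtain ⟨B, hB, rfl⟩ := Finset.mem_image.mp (Finset.mem_coe.mp hp2)
    obtain ⟨C, hC, rfl⟩ := Finset.mem_image.mp (Finset.mem_coe.mp hp3)
    rw [Finset.mem_range] at hA hB hC
    have hAB : A ≠ B := fun h => h12 (congrArg _ h)
    have hAC : A ≠ C := fun h => h13 (congrArg _ h)
    have hBC : B ≠ C := fun h => h23 (congrArg _ h)
    apply HortonProof.not_collinear_of_sig
    rw [HortonProof.sig_eq_sigZ]
    exact_mod_cast HortonProof.sigZ_ne_zero n A B C hA hB hC hAB hAC hBC
  · -- the coloring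
    refine ⟨fun z => ⟨(⌊z.1⌋.toNat) % (2 * q + 1), Nat.mod_lt _ (by omega)⟩, ?_⟩
    intro a ha b hb d hd hab had hbd hχ1 hχ2
    obtain ⟨A, hA, rfl⟩ := Finset.mem_image.mp ha
    obtain ⟨B, hB, rfl⟩ := Finset.mem_image.mp hb
    obtain ⟨D, hD, rfl⟩ := Finset.mem_image.mp hd
    rw [Finset.mem_range] at hA hB hD
    have hAB : A ≠ B := fun h => hab (congrArg _ h)
    have hAD : A ≠ D := fun h => had (congrArg _ h)
    have hBD : B ≠ D := fun h => hbd (congrArg _ h)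
    have hfloor : ∀ x : ℕ, (⌊(HortonProof.P n x).1⌋.toNat) = x := by
      intro x
      simp [HortonProof.P]
    have h1 : A % (2 * q + 1) = B % (2 * q + 1) := by
      have := congrArg Fin.val hχ1
      simpa [hfloor A, hfloor B] using this
    have h2 : B % (2 * q + 1) = D % (2 * q + 1) := by
      have := congrArg Fin.val hχ2
      simpa [hfloor B, hfloor D] using this
    unfold triPts
    exact HortonProof.final_count q n A B D hA hB hD hAB hAD hBD h1 h2

end
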